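/- arXiv:2412.04179 — 4 statements merged into one kernel-verified Lean document; each statement's English description precedes it below -/
import Mathlib

section
/- Let n, L ≥ 1, let A ∈ ℝ^{n×n×L×L} be a nonnegative tensor, let α, β > 1, and let x ∈ ℝ^n, c ∈ ℝ^L be entrywise positive. Then for every index m, |Σ_{i=1}^n (∂²f_{α,β}/∂x_i ∂x_m)(x,c) · x_i| ≤ |α − 1| · (∂f_{α,β}/∂x_m)(x,c). -/
open Finset Function

/-- The multilayer core-periphery objective. -/
noncomputable def mlObjective {n L : ℕ} (A : Fin n → Fin n → Fin L → Fin L → ℝ)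
    (α β : ℝ) (x : Fin n → ℝ) (c : Fin L → ℝ) : ℝ :=
  ∑ i, ∑ j, ∑ k, ∑ l,
    A i j k l * (x i ^ α + x j ^ α) ^ (1 / α) * (c k ^ β + c l ^ β) ^ (1 / β)

/-- The partial derivative `∂f/∂x_m` of the objective with respect to node coreness. -/
noncomputable def partialX {n L : ℕ} (A : Fin n → Fin n → Fin L → Fin L → ℝ)
    (α β : ℝ) (m : Fin n) (x : Fin n → ℝ) (c : Fin L → ℝ) : ℝ :=
  deriv (fun t => mlObjective A α β (Function.update x m t) c) (x m)

lemma hasDerivAt_coord_rpow {n : ℕ} (x : Fin n → ℝ) (hx : ∀ i, 0 < x i) (p : ℝ) (m i : Fin n) :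
    HasDerivAt (fun t => Function.update x m t i ^ p)
      (if i = m then p * x m ^ (p - 1) else 0) (x m) := by
  rcases eq_or_ne i m with h | h
  · subst h
    simpa using Real.hasDerivAt_rpow_const (x := x i) (p := p) (Or.inl (hx i).ne')
  · simp only [Function.update_of_ne h, if_neg h]
    exact hasDerivAt_const _ _

lemma hasDerivAt_gpair {n : ℕ} {α : ℝ} (hα : 0 < α) (x : Fin n → ℝ) (hx : ∀ i, 0 < x i)
    (m i j : Fin n) :
    HasDerivAt (fun t => (Function.update x m t i ^ α + Function.update x m t j ^ α) ^ (1 / α))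
      (((if i = m then (1:ℝ) else 0) + (if j = m then 1 else 0)) *
        (x m ^ (α - 1) * (x i ^ α + x j ^ α) ^ (1 / α - 1))) (x m) := by
  have hS : 0 < x i ^ α + x j ^ α := by
    have := hx i; have := hx j; positivity
  have h1 := hasDerivAt_coord_rpow x hx α m i
  have h2 := hasDerivAt_coord_rpow x hx α m j
  have h3 := (h1.add h2).rpow_const (p := 1 / α)
    (Or.inl (by simp only [Pi.add_apply, Function.update_eq_self]; exact hS.ne'))
  simp only [Pi.add_apply, Function.update_eq_self] at h3
  convert h3 using 1
  split_ifs <;> field_simp <;> ring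

noncomputable def Fsum {n L : ℕ} (A : Fin n → Fin n → Fin L → Fin L → ℝ)
    (α β : ℝ) (m : Fin n) (x : Fin n → ℝ) (c : Fin L → ℝ) : ℝ :=
  ∑ j, ∑ k, ∑ l, (A m j k l + A j m k l) *
    (x m ^ (α - 1) * (x m ^ α + x j ^ α) ^ (1 / α - 1)) * ((c k ^ β + c l ^ β) ^ (1 / β))

lemma hasDerivAt_obj {n L : ℕ} (A : Fin n → Fin n → Fin L → Fin L → ℝ) {α : ℝ} (β : ℝ)
    (hα : 0 < α) (x : Fin n → ℝ) (c : Fin L → ℝ) (hx : ∀ i, 0 < x i) (m : Fin n) :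
    HasDerivAt (fun t => mlObjective A α β (Function.update x m t) c)
      (Fsum A α β m x c) (x m) := by
  have h : HasDerivAt (fun t => mlObjective A α β (Function.update x m t) c)
      (∑ i, ∑ j, ∑ k, ∑ l, A i j k l *
        (((if i = m then (1:ℝ) else 0) + (if j = m then 1 else 0)) *
          (x m ^ (α - 1) * (x i ^ α + x j ^ α) ^ (1 / α - 1))) *
        ((c k ^ β + c l ^ β) ^ (1 / β))) (x m) := by
    unfold mlObjective
    apply HasDerivAt.fun_sum; intro i _
    apply HasDerivAt.fun_sum; intro j _
    apply HasDerivAt.fun_sum; intro k _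
    apply HasDerivAt.fun_sum; intro l _
    exact (HasDerivAt.const_mul (A i j k l) (hasDerivAt_gpair hα x hx m i j)).mul_const _
  convert h using 1
  unfold Fsum
  have step1 : (∑ i, ∑ j, ∑ k, ∑ l, A i j k l *
        (((if i = m then (1:ℝ) else 0) + (if j = m then 1 else 0)) *
          (x m ^ (α - 1) * (x i ^ α + x j ^ α) ^ (1 / α - 1))) *
        ((c k ^ β + c l ^ β) ^ (1 / β)))
      = (∑ i, ∑ j, ∑ k, ∑ l, ((if i = m then A i j k l *
          (x m ^ (α - 1) * (x i ^ α + x j ^ α) ^ (1 / α - 1)) *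
          ((c k ^ β + c l ^ β) ^ (1 / β)) else 0) +
        (if j = m then A i j k l *
          (x m ^ (α - 1) * (x i ^ α + x j ^ α) ^ (1 / α - 1)) *
          ((c k ^ β + c l ^ β) ^ (1 / β)) else 0))) := by
    refine Finset.sum_congr rfl fun i _ => Finset.sum_congr rfl fun j _ =>
      Finset.sum_congr rfl fun k _ => Finset.sum_congr rfl fun l _ => ?_
    split_ifs <;> ring
  rw [step1]
  simp only [Finset.sum_add_distrib]
  have hP : ∀ (f : Fin n → Fin n → Fin L → Fin L → ℝ),
      (∑ i, ∑ j, ∑ k, ∑ l, if i = m then f i j k l else 0) = ∑ j, ∑ k, ∑ l, f m j k l := by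
    intro f
    rw [Finset.sum_eq_single m]
    · simp
    · intro i _ hi; simp [hi]
    · intro h'; exact absurd (Finset.mem_univ m) h'
  have hQ : ∀ (f : Fin n → Fin n → Fin L → Fin L → ℝ),
      (∑ i, ∑ j, ∑ k, ∑ l, if j = m then f i j k l else 0) = ∑ i, ∑ k, ∑ l, f i m k l := by
    intro f
    refine Finset.sum_congr rfl fun i _ => ?_
    rw [Finset.sum_eq_single m]
    · simp
    · intro j _ hj; simp [hj]
    · intro h'; exact absurd (Finset.mem_univ m) h'
  rw [hP, hQ]
  have : ∀ j k l : _, (A m j k l + A j m k l) *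
      (x m ^ (α - 1) * (x m ^ α + x j ^ α) ^ (1 / α - 1)) * ((c k ^ β + c l ^ β) ^ (1 / β))
    = A m j k l * (x m ^ (α - 1) * (x m ^ α + x j ^ α) ^ (1 / α - 1)) *
        ((c k ^ β + c l ^ β) ^ (1 / β)) +
      A j m k l * (x m ^ (α - 1) * (x j ^ α + x m ^ α) ^ (1 / α - 1)) *
        ((c k ^ β + c l ^ β) ^ (1 / β)) := by
    intro j k l; rw [add_comm (x j ^ α)]; ring
  rw [Finset.sum_congr rfl fun j _ => Finset.sum_congr rfl fun k _ =>
    Finset.sum_congr rfl fun l _ => this j k l]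
  simp only [Finset.sum_add_distrib]

lemma partialX_eq {n L : ℕ} (A : Fin n → Fin n → Fin L → Fin L → ℝ) {α : ℝ} (β : ℝ)
    (hα : 0 < α) (x : Fin n → ℝ) (c : Fin L → ℝ) (hx : ∀ i, 0 < x i) (m : Fin n) :
    partialX A α β m x c = Fsum A α β m x c :=
  (hasDerivAt_obj A β hα x c hx m).deriv

lemma hasDerivAt_phi {n : ℕ} {α : ℝ} (hα : 0 < α) (x : Fin n → ℝ) (hx : ∀ i, 0 < x i)
    (m j i : Fin n) :
    HasDerivAt (fun t => Function.update x i t m ^ (α - 1) *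
        (Function.update x i t m ^ α + Function.update x i t j ^ α) ^ (1 / α - 1))
      ((α - 1) * ((if m = i then x m ^ (α - 2) * x j ^ α else 0) -
          (if j = i then x m ^ (α - 1) * x j ^ (α - 1) else 0)) *
        (x m ^ α + x j ^ α) ^ (1 / α - 2)) (x i) := by
  have hS : 0 < x m ^ α + x j ^ α := by
    have := hx m; have := hx j; positivity
  have h1 : HasDerivAt (fun t => Function.update x i t m ^ (α - 1))
      (if m = i then (α - 1) * x i ^ (α - 2) else 0) (x i) := by
    have := hasDerivAt_coord_rpow x hx (α - 1) i m
    simpa [show α - 1 - 1 = α - 2 by ring] using this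
  have ha := hasDerivAt_coord_rpow x hx α i m
  have hb := hasDerivAt_coord_rpow x hx α i j
  have h2 := (ha.add hb).rpow_const (p := 1 / α - 1)
    (Or.inl (by simp only [Pi.add_apply, Function.update_eq_self]; exact hS.ne'))
  have h := h1.mul h2
  simp only [Pi.add_apply, Function.update_eq_self] at h
  refine h.congr_deriv (Eq.symm ?_)
  rw [show 1 / α - 1 - 1 = 1 / α - 2 by ring]
  have em : x m ^ (α - 1) = x m ^ (α - 2) * x m := by
    rw [← Real.rpow_add_one (hx m).ne']; congr 1; ring
  have em2 : x m ^ α = x m ^ (α - 2) * x m * x m := by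
    rw [← Real.rpow_add_one (hx m).ne', ← Real.rpow_add_one (hx m).ne']; congr 1; ring
  have ej : x j ^ α = x j ^ (α - 1) * x j := by
    rw [← Real.rpow_add_one (hx j).ne']; congr 1; ring
  have eS : (x m ^ α + x j ^ α) ^ (1 / α - 1)
      = (x m ^ α + x j ^ α) * (x m ^ α + x j ^ α) ^ (1 / α - 2) := by
    rw [mul_comm, ← Real.rpow_add_one hS.ne']; congr 1; ring
  rcases eq_or_ne m i with hmi | hmi <;> rcases eq_or_ne j i with hji | hji
  · subst hmi; subst hji
    simp only [eq_self_iff_true, if_true]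
    rw [eS]
    simp only [em, em2, ej]
    field_simp [hα.ne']
    ring
  · subst hmi
    simp only [eq_self_iff_true, if_true, if_neg hji]
    rw [eS]
    simp only [em, em2, ej]
    field_simp [hα.ne']
    ring
  · subst hji
    simp only [eq_self_iff_true, if_true, if_neg hmi]
    rw [eS]
    simp only [em, em2, ej]
    field_simp [hα.ne']
    ring
  · simp only [if_neg hmi, if_neg hji]
    ring

noncomputable def Dsum {n L : ℕ} (A : Fin n → Fin n → Fin L → Fin L → ℝ)
    (α β : ℝ) (m i : Fin n) (x : Fin n → ℝ) (c : Fin L → ℝ) : ℝ :=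
  ∑ j, ∑ k, ∑ l, (A m j k l + A j m k l) *
    ((α - 1) * ((if m = i then x m ^ (α - 2) * x j ^ α else 0) -
        (if j = i then x m ^ (α - 1) * x j ^ (α - 1) else 0)) *
      (x m ^ α + x j ^ α) ^ (1 / α - 2)) * ((c k ^ β + c l ^ β) ^ (1 / β))

lemma hasDerivAt_Fsum {n L : ℕ} (A : Fin n → Fin n → Fin L → Fin L → ℝ) {α : ℝ} (β : ℝ)
    (hα : 0 < α) (x : Fin n → ℝ) (c : Fin L → ℝ) (hx : ∀ i, 0 < x i) (m i : Fin n) :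
    HasDerivAt (fun t => Fsum A α β m (Function.update x i t) c)
      (Dsum A α β m i x c) (x i) := by
  unfold Fsum Dsum
  apply HasDerivAt.fun_sum; intro j _
  apply HasDerivAt.fun_sum; intro k _
  apply HasDerivAt.fun_sum; intro l _
  exact (HasDerivAt.const_mul (A m j k l + A j m k l)
    (hasDerivAt_phi hα x hx m j i)).mul_const _

theorem second_partial_xx_bound {n L : ℕ} (hn : 1 ≤ n) (hL : 1 ≤ L)
    (A : Fin n → Fin n → Fin L → Fin L → ℝ) (hA : ∀ i j k l, 0 ≤ A i j k l)
    (α β : ℝ) (hα : 1 < α) (hβ : 1 < β)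
    (x : Fin n → ℝ) (c : Fin L → ℝ) (hx : ∀ i, 0 < x i) (hc : ∀ k, 0 < c k) :
    ∀ m : Fin n,
      |∑ i, deriv (fun t => partialX A α β m (Function.update x i t) c) (x i) * x i| ≤
        |α - 1| * partialX A α β m x c := by
  intro m
  have hα0 : (0:ℝ) < α := by linarith
  have hderiv : ∀ i : Fin n,
      deriv (fun t => partialX A α β m (Function.update x i t) c) (x i)
        = Dsum A α β m i x c := by
    intro i
    have hev : (fun t => partialX A α β m (Function.update x i t) c)
        =ᶠ[nhds (x i)] (fun t => Fsum A α β m (Function.update x i t) c) := by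
      filter_upwards [eventually_gt_nhds (hx i)] with t ht
      refine partialX_eq A β hα0 _ c (fun p => ?_) m
      rcases eq_or_ne p i with h | h
      · subst h; simpa using ht
      · simpa [Function.update_of_ne h] using hx p
    rw [hev.deriv_eq, (hasDerivAt_Fsum A β hα0 x c hx m i).deriv]
  have em : x m ^ (α - 1) = x m ^ (α - 2) * x m := by
    rw [← Real.rpow_add_one (hx m).ne']; congr 1; ring
  have hzero : ∑ i, Dsum A α β m i x c * x i = 0 := by
    unfold Dsum
    simp only [Finset.sum_mul]
    rw [Finset.sum_comm]
    refine Finset.sum_eq_zero fun j _ => ?_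
    rw [Finset.sum_comm]
    refine Finset.sum_eq_zero fun k _ => ?_
    rw [Finset.sum_comm]
    refine Finset.sum_eq_zero fun l _ => ?_
    have step : ∀ i : Fin n, (A m j k l + A j m k l) *
        ((α - 1) * ((if m = i then x m ^ (α - 2) * x j ^ α else 0) -
            (if j = i then x m ^ (α - 1) * x j ^ (α - 1) else 0)) *
          (x m ^ α + x j ^ α) ^ (1 / α - 2)) * ((c k ^ β + c l ^ β) ^ (1 / β)) * x i
      = (if m = i then (A m j k l + A j m k l) * ((α - 1) * (x m ^ (α - 2) * x j ^ α) *
          (x m ^ α + x j ^ α) ^ (1 / α - 2)) * ((c k ^ β + c l ^ β) ^ (1 / β)) * x i else 0)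
        - (if j = i then (A m j k l + A j m k l) * ((α - 1) * (x m ^ (α - 1) * x j ^ (α - 1)) *
          (x m ^ α + x j ^ α) ^ (1 / α - 2)) * ((c k ^ β + c l ^ β) ^ (1 / β)) * x i else 0) := by
      intro i; split_ifs <;> ring
    rw [Finset.sum_congr rfl fun i _ => step i, Finset.sum_sub_distrib,
      Finset.sum_ite_eq, Finset.sum_ite_eq]
    simp only [Finset.mem_univ, if_true]
    have ej : x j ^ α = x j ^ (α - 1) * x j := by
      rw [← Real.rpow_add_one (hx j).ne']; congr 1; ring
    rw [em, ej]
    ring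
  have hsum : ∑ i, deriv (fun t => partialX A α β m (Function.update x i t) c) (x i) * x i
      = 0 := by
    rw [Finset.sum_congr rfl fun i _ => by rw [hderiv i]]
    exact hzero
  rw [hsum, abs_zero]
  refine mul_nonneg (abs_nonneg _) ?_
  rw [partialX_eq A β hα0 x c hx m]
  unfold Fsum
  refine Finset.sum_nonneg fun j _ => Finset.sum_nonneg fun k _ =>
    Finset.sum_nonneg fun l _ => ?_
  have h1 : (0:ℝ) ≤ A m j k l + A j m k l := add_nonneg (hA _ _ _ _) (hA _ _ _ _)
  have h2 : (0:ℝ) ≤ x m ^ (α - 1) * (x m ^ α + x j ^ α) ^ (1 / α - 1) := by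
    have := hx m; have := hx j; positivity
  have h3 : (0:ℝ) ≤ (c k ^ β + c l ^ β) ^ (1 / β) := by
    have := hc k; have := hc l; positivity
  exact mul_nonneg (mul_nonneg h1 h2) h3
end

section
/- Let n, L ≥ 1, let A ∈ ℝ^{n×n×L×L} be a nonnegative tensor, let α, β > 1, and let x ∈ ℝ^n, c ∈ ℝ^L be entrywise positive. Then for every index p, |Σ_{i=1}^n (∂²f_{α,β}/∂x_i ∂c_p)(x,c) · x_i| ≤ 2 · (∂f_{α,β}/∂c_p)(x,c). -/
open Finset Function

/-- The partial derivative `∂f/∂c_p` of the objective with respect to layer coreness. -/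
noncomputable def partialC {n L : ℕ} (A : Fin n → Fin n → Fin L → Fin L → ℝ)
    (α β : ℝ) (p : Fin L) (x : Fin n → ℝ) (c : Fin L → ℝ) : ℝ :=
  deriv (fun t => mlObjective A α β x (Function.update c p t)) (c p)

lemma hder {γ : ℝ} (hγ : 1 < γ) {f1 f2 : ℝ → ℝ} {d1 d2 t0 : ℝ}
    (h1 : HasDerivAt f1 d1 t0) (h2 : HasDerivAt f2 d2 t0)
    (hp1 : 0 < f1 t0) (hp2 : 0 < f2 t0) :
    HasDerivAt (fun t => (f1 t ^ γ + f2 t ^ γ) ^ (1 / γ))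
      ((f1 t0 ^ γ + f2 t0 ^ γ) ^ (1 / γ - 1) *
        (f1 t0 ^ (γ - 1) * d1 + f2 t0 ^ (γ - 1) * d2)) t0 := by
  have hS : 0 < f1 t0 ^ γ + f2 t0 ^ γ := by positivity
  have hg1 := h1.rpow_const (p := γ) (Or.inl hp1.ne')
  have hg2 := h2.rpow_const (p := γ) (Or.inl hp2.ne')
  have H := (hg1.add hg2).rpow_const (p := 1 / γ) (Or.inl hS.ne')
  convert H using 1
  · rfl
  have hγ0 : γ ≠ 0 := by linarith
  simp only [Pi.add_apply]
  field_simp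

lemma upd_hasDeriv {m : ℕ} {γ : ℝ} (hγ : 1 < γ) (y : Fin m → ℝ) (hy : ∀ i, 0 < y i)
    (q a b : Fin m) :
    HasDerivAt
      (fun t => (Function.update y q t a ^ γ + Function.update y q t b ^ γ) ^ (1 / γ))
      ((y a ^ γ + y b ^ γ) ^ (1 / γ - 1) *
        (y a ^ (γ - 1) * (if a = q then 1 else 0) +
         y b ^ (γ - 1) * (if b = q then 1 else 0))) (y q) := by
  have h1 : HasDerivAt (fun t => Function.update y q t a) (if a = q then 1 else 0) (y q) := by
    simp only [Function.update_apply]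
    split_ifs with h
    · exact hasDerivAt_id' (y q)
    · exact hasDerivAt_const _ _
  have h2 : HasDerivAt (fun t => Function.update y q t b) (if b = q then 1 else 0) (y q) := by
    simp only [Function.update_apply]
    split_ifs with h
    · exact hasDerivAt_id' (y q)
    · exact hasDerivAt_const _ _
  have hp1 : 0 < Function.update y q (y q) a := by
    rw [Function.update_eq_self]; exact hy a
  have hp2 : 0 < Function.update y q (y q) b := by
    rw [Function.update_eq_self]; exact hy b
  have H := hder hγ h1 h2 hp1 hp2
  simpa [Function.update_eq_self] using H

lemma partialC_eq {n L : ℕ} (A : Fin n → Fin n → Fin L → Fin L → ℝ)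
    {α β : ℝ} (hβ : 1 < β) (p : Fin L) (y : Fin n → ℝ) (c : Fin L → ℝ)
    (hc : ∀ k, 0 < c k) :
    partialC A α β p y c =
      ∑ i, ∑ j, ∑ k, ∑ l, A i j k l * (y i ^ α + y j ^ α) ^ (1 / α) *
        ((c k ^ β + c l ^ β) ^ (1 / β - 1) *
          (c k ^ (β - 1) * (if k = p then 1 else 0) +
           c l ^ (β - 1) * (if l = p then 1 else 0))) := by
  have H : HasDerivAt (fun t => mlObjective A α β y (Function.update c p t))
      (∑ i, ∑ j, ∑ k, ∑ l, A i j k l * (y i ^ α + y j ^ α) ^ (1 / α) *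
        ((c k ^ β + c l ^ β) ^ (1 / β - 1) *
          (c k ^ (β - 1) * (if k = p then 1 else 0) +
           c l ^ (β - 1) * (if l = p then 1 else 0)))) (c p) := by
    unfold mlObjective
    apply HasDerivAt.fun_sum; intro i _
    apply HasDerivAt.fun_sum; intro j _
    apply HasDerivAt.fun_sum; intro k _
    apply HasDerivAt.fun_sum; intro l _
    exact (upd_hasDeriv hβ c hc p k l).const_mul _
  exact H.deriv

lemma partialC_update_hasDeriv {n L : ℕ} (A : Fin n → Fin n → Fin L → Fin L → ℝ)
    {α β : ℝ} (hα : 1 < α) (hβ : 1 < β) (p : Fin L)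
    (x : Fin n → ℝ) (c : Fin L → ℝ) (hx : ∀ i, 0 < x i) (hc : ∀ k, 0 < c k) (i : Fin n) :
    HasDerivAt (fun t => partialC A α β p (Function.update x i t) c)
      (∑ i', ∑ j', ∑ k, ∑ l, A i' j' k l *
        ((x i' ^ α + x j' ^ α) ^ (1 / α - 1) *
          (x i' ^ (α - 1) * (if i' = i then 1 else 0) +
           x j' ^ (α - 1) * (if j' = i then 1 else 0))) *
        ((c k ^ β + c l ^ β) ^ (1 / β - 1) *
          (c k ^ (β - 1) * (if k = p then 1 else 0) +
           c l ^ (β - 1) * (if l = p then 1 else 0)))) (x i) := by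
  have hfe : (fun t => partialC A α β p (Function.update x i t) c) =
      (fun t => ∑ i', ∑ j', ∑ k, ∑ l, A i' j' k l *
        (Function.update x i t i' ^ α + Function.update x i t j' ^ α) ^ (1 / α) *
        ((c k ^ β + c l ^ β) ^ (1 / β - 1) *
          (c k ^ (β - 1) * (if k = p then 1 else 0) +
           c l ^ (β - 1) * (if l = p then 1 else 0)))) :=
    funext fun t => partialC_eq A hβ p _ c hc
  rw [hfe]
  apply HasDerivAt.fun_sum; intro i' _
  apply HasDerivAt.fun_sum; intro j' _
  apply HasDerivAt.fun_sum; intro k _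
  apply HasDerivAt.fun_sum; intro l _
  exact ((upd_hasDeriv hα x hx i i' j').const_mul (A i' j' k l)).mul_const _

theorem second_partial_xc_bound {n L : ℕ} (hn : 1 ≤ n) (hL : 1 ≤ L)
    (A : Fin n → Fin n → Fin L → Fin L → ℝ) (hA : ∀ i j k l, 0 ≤ A i j k l)
    (α β : ℝ) (hα : 1 < α) (hβ : 1 < β)
    (x : Fin n → ℝ) (c : Fin L → ℝ) (hx : ∀ i, 0 < x i) (hc : ∀ k, 0 < c k) :
    ∀ p : Fin L,
      |∑ i, deriv (fun t => partialC A α β p (Function.update x i t) c) (x i) * x i| ≤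
        2 * partialC A α β p x c := by
  intro p
  set K : Fin L → Fin L → ℝ := fun k l =>
    (c k ^ β + c l ^ β) ^ (1 / β - 1) *
      (c k ^ (β - 1) * (if k = p then 1 else 0) +
       c l ^ (β - 1) * (if l = p then 1 else 0)) with hK
  have hKnn : ∀ k l, 0 ≤ K k l := by
    intro k l
    apply mul_nonneg (Real.rpow_nonneg (add_nonneg (Real.rpow_nonneg (hc k).le β) (Real.rpow_nonneg (hc l).le β)) _)
    apply add_nonneg <;> · apply mul_nonneg (Real.rpow_nonneg (le_of_lt (hc _)) _)
                           split_ifs <;> norm_num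
  have hP : partialC A α β p x c =
      ∑ i', ∑ j', ∑ k, ∑ l, A i' j' k l * (x i' ^ α + x j' ^ α) ^ (1 / α) * K k l :=
    partialC_eq A hβ p x c hc
  have hPnn : 0 ≤ partialC A α β p x c := by
    rw [hP]
    apply Finset.sum_nonneg; intro i' _
    apply Finset.sum_nonneg; intro j' _
    apply Finset.sum_nonneg; intro k _
    apply Finset.sum_nonneg; intro l _
    exact mul_nonneg (mul_nonneg (hA _ _ _ _) (Real.rpow_nonneg
      (add_nonneg (Real.rpow_nonneg (hx i').le α) (Real.rpow_nonneg (hx j').le α)) _)) (hKnn k l)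
  have hstep : ∑ i, deriv (fun t => partialC A α β p (Function.update x i t) c) (x i) * x i =
      partialC A α β p x c := by
    have hd : ∀ i, deriv (fun t => partialC A α β p (Function.update x i t) c) (x i) =
        ∑ i', ∑ j', ∑ k, ∑ l, A i' j' k l *
          ((x i' ^ α + x j' ^ α) ^ (1 / α - 1) *
            (x i' ^ (α - 1) * (if i' = i then 1 else 0) +
             x j' ^ (α - 1) * (if j' = i then 1 else 0))) * K k l :=
      fun i => (partialC_update_hasDeriv A hα hβ p x c hx hc i).deriv
    calc ∑ i, deriv (fun t => partialC A α β p (Function.update x i t) c) (x i) * x i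
        = ∑ i, ∑ i', ∑ j', ∑ k, ∑ l, A i' j' k l *
          ((x i' ^ α + x j' ^ α) ^ (1 / α - 1) *
            (x i' ^ (α - 1) * (if i' = i then 1 else 0) +
             x j' ^ (α - 1) * (if j' = i then 1 else 0))) * K k l * x i := by
          refine Finset.sum_congr rfl fun i _ => ?_
          rw [hd i]
          simp only [Finset.sum_mul]
      _ = ∑ i', ∑ j', ∑ k, ∑ l, A i' j' k l * (x i' ^ α + x j' ^ α) ^ (1 / α) * K k l := by
          rw [Finset.sum_comm]
          refine Finset.sum_congr rfl fun i' _ => ?_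
          rw [Finset.sum_comm]
          refine Finset.sum_congr rfl fun j' _ => ?_
          rw [Finset.sum_comm]
          refine Finset.sum_congr rfl fun k _ => ?_
          rw [Finset.sum_comm]
          refine Finset.sum_congr rfl fun l _ => ?_
          have hi' := (hx i').ne'
          have hj' := (hx j').ne'
          have hS : (0:ℝ) < x i' ^ α + x j' ^ α :=
            add_pos (Real.rpow_pos_of_pos (hx i') α) (Real.rpow_pos_of_pos (hx j') α)
          have e1 : x i' ^ (α - 1) * x i' = x i' ^ α := by
            rw [Real.rpow_sub_one hi']; field_simp
          have e2 : x j' ^ (α - 1) * x j' = x j' ^ α := by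
            rw [Real.rpow_sub_one hj']; field_simp
          have e3 : (x i' ^ α + x j' ^ α) ^ (1 / α - 1) * (x i' ^ α + x j' ^ α)
              = (x i' ^ α + x j' ^ α) ^ (1 / α) := by
            rw [Real.rpow_sub_one hS.ne']; field_simp
          calc ∑ i, A i' j' k l *
                ((x i' ^ α + x j' ^ α) ^ (1 / α - 1) *
                  (x i' ^ (α - 1) * (if i' = i then 1 else 0) +
                   x j' ^ (α - 1) * (if j' = i then 1 else 0))) * K k l * x i
              = ∑ i, ((if i' = i then
                    (A i' j' k l * ((x i' ^ α + x j' ^ α) ^ (1 / α - 1) * x i' ^ (α - 1)) * K k l) * x i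
                  else 0) +
                 (if j' = i then
                    (A i' j' k l * ((x i' ^ α + x j' ^ α) ^ (1 / α - 1) * x j' ^ (α - 1)) * K k l) * x i
                  else 0)) := by
                refine Finset.sum_congr rfl fun i _ => ?_
                split_ifs <;> ring
            _ = A i' j' k l * ((x i' ^ α + x j' ^ α) ^ (1 / α - 1) * x i' ^ (α - 1)) * K k l * x i'
                + A i' j' k l * ((x i' ^ α + x j' ^ α) ^ (1 / α - 1) * x j' ^ (α - 1)) * K k l * x j' := by
                rw [Finset.sum_add_distrib, Finset.sum_ite_eq, Finset.sum_ite_eq]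
                simp
            _ = A i' j' k l * (x i' ^ α + x j' ^ α) ^ (1 / α) * K k l := by
                rw [← e3]
                linear_combination
                  (A i' j' k l * (x i' ^ α + x j' ^ α) ^ (1 / α - 1) * K k l) * e1 +
                  (A i' j' k l * (x i' ^ α + x j' ^ α) ^ (1 / α - 1) * K k l) * e2
    rw [hP]
  rw [hstep, abs_of_nonneg hPnn]
  linarith
end

section
/- Let n, L ≥ 1, let A ∈ ℝ^{n×n×L×L} be a nonnegative tensor such that for every node index m there exist indices j, k, l with A_{mj}^{kl} + A_{jm}^{kl} > 0, and let α, β > 1. Then for all entrywise positive x ∈ ℝ^n, c ∈ ℝ^L and every index m, (∂f_{α,β}/∂x_m)(x,c) > 0; that is, the gradient of f_{α,β} with respect to x is entrywise positive. -/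
open Finset Function

lemma quad_sum_pos {n L : ℕ} (T : Fin n → Fin n → Fin L → Fin L → ℝ)
    (hT : ∀ i j k l, 0 ≤ T i j k l) (i0 j0 : Fin n) (k0 l0 : Fin L)
    (h : 0 < T i0 j0 k0 l0) : 0 < ∑ i, ∑ j, ∑ k, ∑ l, T i j k l := by
  have h1 : T i0 j0 k0 l0 ≤ ∑ l, T i0 j0 k0 l :=
    Finset.single_le_sum (fun l _ => hT i0 j0 k0 l) (Finset.mem_univ l0)
  have h2 : ∑ l, T i0 j0 k0 l ≤ ∑ k, ∑ l, T i0 j0 k l :=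
    Finset.single_le_sum (fun k _ => Finset.sum_nonneg fun l _ => hT i0 j0 k l)
      (Finset.mem_univ k0)
  have h3 : ∑ k, ∑ l, T i0 j0 k l ≤ ∑ j, ∑ k, ∑ l, T i0 j k l :=
    Finset.single_le_sum
      (fun j _ => Finset.sum_nonneg fun k _ => Finset.sum_nonneg fun l _ => hT i0 j k l)
      (Finset.mem_univ j0)
  have h4 : ∑ j, ∑ k, ∑ l, T i0 j k l ≤ ∑ i, ∑ j, ∑ k, ∑ l, T i j k l :=
    Finset.single_le_sum
      (fun i _ => Finset.sum_nonneg fun j _ => Finset.sum_nonneg fun k _ =>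
        Finset.sum_nonneg fun l _ => hT i j k l)
      (Finset.mem_univ i0)
  linarith

theorem gradient_x_pos {n L : ℕ} (hn : 1 ≤ n) (hL : 1 ≤ L)
    (A : Fin n → Fin n → Fin L → Fin L → ℝ) (hA : ∀ i j k l, 0 ≤ A i j k l)
    (hAx : ∀ m : Fin n, ∃ j k l, 0 < A m j k l + A j m k l)
    (α β : ℝ) (hα : 1 < α) (hβ : 1 < β) :
    ∀ (x : Fin n → ℝ) (c : Fin L → ℝ), (∀ i, 0 < x i) → (∀ k, 0 < c k) →
      ∀ m : Fin n, 0 < partialX A α β m x c := by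
  intro x c hx hc m
  have ha : 0 < x m := hx m
  have hα0 : 0 < α := by linarith
  set e : Fin n → ℝ := fun i => if i = m then α * x m ^ (α - 1) else 0 with he_def
  have he_nonneg : ∀ i, 0 ≤ e i := by
    intro i; simp only [he_def]
    split
    · positivity
    · exact le_rfl
  have he_m : 0 < e m := by
    simp only [he_def, if_pos rfl]; positivity
  have hupd : Function.update x m (x m) = x := Function.update_eq_self m x
  have hbase : ∀ i : Fin n, HasDerivAt (fun t => Function.update x m t i ^ α) (e i) (x m) := by
    intro i
    by_cases h : i = m
    · have heq : (fun t => Function.update x m t i ^ α) = fun t => t ^ α := by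
        funext t; rw [h, Function.update_self]
      rw [heq]
      simpa [he_def, h] using Real.hasDerivAt_rpow_const (x := x m) (p := α) (Or.inl ha.ne')
    · have heq : (fun t => Function.update x m t i ^ α) = fun _ => x i ^ α := by
        funext t; rw [Function.update_of_ne h]
      rw [heq]
      simpa [he_def, h] using hasDerivAt_const (x m) (x i ^ α)
  set d : Fin n → Fin n → ℝ :=
    fun i j => (e i + e j) * (1 / α) * (x i ^ α + x j ^ α) ^ (1 / α - 1) with hd_def
  have hxpow : ∀ i j : Fin n, (0:ℝ) < x i ^ α + x j ^ α := by
    intro i j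
    have := hx i; have := hx j
    positivity
  have hg : ∀ i j : Fin n, HasDerivAt
      (fun t => (Function.update x m t i ^ α + Function.update x m t j ^ α) ^ (1 / α))
      (d i j) (x m) := by
    intro i j
    have hsum : HasDerivAt
        (fun t => Function.update x m t i ^ α + Function.update x m t j ^ α)
        (e i + e j) (x m) := (hbase i).add (hbase j)
    have hne : Function.update x m (x m) i ^ α + Function.update x m (x m) j ^ α ≠ 0 := by
      rw [hupd]; exact (hxpow i j).ne'
    have := hsum.rpow_const (p := 1 / α) (Or.inl hne)
    simpa [hupd, hd_def] using this
  set w : Fin L → Fin L → ℝ := fun k l => (c k ^ β + c l ^ β) ^ (1 / β) with hw_def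
  have hw : ∀ k l, 0 < w k l := by
    intro k l
    have := hc k; have := hc l
    have : (0:ℝ) < c k ^ β + c l ^ β := by positivity
    exact Real.rpow_pos_of_pos this _
  have hF : HasDerivAt (fun t => mlObjective A α β (Function.update x m t) c)
      (∑ i, ∑ j, ∑ k, ∑ l, A i j k l * d i j * w k l) (x m) := by
    unfold mlObjective
    apply HasDerivAt.fun_sum; intro i _
    apply HasDerivAt.fun_sum; intro j _
    apply HasDerivAt.fun_sum; intro k _
    apply HasDerivAt.fun_sum; intro l _
    exact ((hg i j).const_mul (A i j k l)).mul_const (w k l)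
  have hderiv : partialX A α β m x c = ∑ i, ∑ j, ∑ k, ∑ l, A i j k l * d i j * w k l := by
    unfold partialX
    exact hF.deriv
  have hd_nonneg : ∀ i j, 0 ≤ d i j := by
    intro i j
    have h1 : 0 ≤ e i + e j := add_nonneg (he_nonneg i) (he_nonneg j)
    have h2 : (0:ℝ) ≤ (x i ^ α + x j ^ α) ^ (1 / α - 1) := (Real.rpow_pos_of_pos (hxpow i j) _).le
    simp only [hd_def]
    positivity
  have hT : ∀ i j k l, 0 ≤ A i j k l * d i j * w k l := fun i j k l =>
    mul_nonneg (mul_nonneg (hA i j k l) (hd_nonneg i j)) (hw k l).le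
  have hdm : ∀ j, 0 < d m j := by
    intro j
    have h1 : 0 < e m + e j := lt_of_lt_of_le he_m (le_add_of_nonneg_right (he_nonneg j))
    have h2 : (0:ℝ) < (x m ^ α + x j ^ α) ^ (1 / α - 1) := Real.rpow_pos_of_pos (hxpow m j) _
    simp only [hd_def]
    positivity
  have hdm' : ∀ j, 0 < d j m := by
    intro j
    have h1 : 0 < e j + e m := lt_of_lt_of_le he_m (le_add_of_nonneg_left (he_nonneg j))
    have h2 : (0:ℝ) < (x j ^ α + x m ^ α) ^ (1 / α - 1) := Real.rpow_pos_of_pos (hxpow j m) _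
    simp only [hd_def]
    positivity
  rw [hderiv]
  obtain ⟨j0, k0, l0, hpos⟩ := hAx m
  rcases lt_or_ge 0 (A m j0 k0 l0) with h | h
  · exact quad_sum_pos _ hT m j0 k0 l0
      (mul_pos (mul_pos h (hdm j0)) (hw k0 l0))
  · have h' : 0 < A j0 m k0 l0 := by
      have := hA m j0 k0 l0
      linarith
    exact quad_sum_pos _ hT j0 m k0 l0
      (mul_pos (mul_pos h' (hdm' j0)) (hw k0 l0))
end

section
/- Let n ≥ 1, let B ∈ ℝ^{n×n} be a real matrix, set n_1 = Σ_{i,j=1}^n B_{ij} and n_2 = n² − n_1, and assume n_1 ≠ 0 and n_2 ≠ 0. Let x̄ ∈ {0,1}^n be a binary vector. Then the QUBO objective admits an exact quadratic-form representation: Σ_{i,j=1}^n [ (B_{ij}/n_1)·max{x̄_i, x̄_j} + ((1−B_{ij})/n_2)·(1 − max{x̄_i, x̄_j}) ] = x̄ᵀ Q x̄ + 1, where Q = (1/n_1 + 1/n_2)·diag(B·𝟙 + Bᵀ·𝟙) − (2n/n_2)·I_n − (1/n_1 + 1/n_2)·B + (1/n_2)·𝟙𝟙ᵀ, with 𝟙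 ∈ ℝ^n the all-ones vector, I_n the identity matrix, and diag(v) the diagonal matrix with diagonal v. -/
open Finset Matrix

private lemma dadd {n : ℕ} (f g : Fin n → Fin n → ℝ) :
    ∑ i, ∑ j, (f i j + g i j) = (∑ i, ∑ j, f i j) + (∑ i, ∑ j, g i j) := by
  simp [Finset.sum_add_distrib]

private lemma dsub {n : ℕ} (f g : Fin n → Fin n → ℝ) :
    ∑ i, ∑ j, (f i j - g i j) = (∑ i, ∑ j, f i j) - (∑ i, ∑ j, g i j) := by
  simp [Finset.sum_sub_distrib]

private lemma dmul {n : ℕ} (a : ℝ) (f : Fin n → Fin n → ℝ) :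
    ∑ i, ∑ j, a * f i j = a * ∑ i, ∑ j, f i j := by
  simp [Finset.mul_sum]

private lemma dconst1 {n : ℕ} (x : Fin n → ℝ) :
    ∑ i : Fin n, ∑ _j : Fin n, x i = (n : ℝ) * ∑ i, x i := by
  simp [Finset.sum_const, mul_comm, Finset.sum_mul]

private lemma dconst2 {n : ℕ} (x : Fin n → ℝ) :
    ∑ _i : Fin n, ∑ j : Fin n, x j = (n : ℝ) * ∑ i, x i := by
  simp [Finset.sum_const]

private lemma dprod {n : ℕ} (x : Fin n → ℝ) :
    ∑ i : Fin n, ∑ j : Fin n, x i * x j = (∑ i, x i) * (∑ i, x i) := by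
  rw [Finset.sum_mul_sum]

private lemma done' {n : ℕ} :
    ∑ _i : Fin n, ∑ _j : Fin n, (1 : ℝ) = (n : ℝ) ^ 2 := by
  simp [Finset.sum_const]; ring

theorem qubo_quadratic_form {n : ℕ} (hn : 1 ≤ n) (B : Matrix (Fin n) (Fin n) ℝ)
    (n1 n2 : ℝ) (hn1def : n1 = ∑ i, ∑ j, B i j) (hn2def : n2 = (n : ℝ) ^ 2 - n1)
    (hn1 : n1 ≠ 0) (hn2 : n2 ≠ 0)
    (xbar : Fin n → ℝ) (hxbar : ∀ i, xbar i = 0 ∨ xbar i = 1) :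
    ∑ i, ∑ j,
        (B i j / n1 * max (xbar i) (xbar j) +
          (1 - B i j) / n2 * (1 - max (xbar i) (xbar j))) =
      (∑ i, ∑ j, xbar i *
        ((1 / n1 + 1 / n2) • Matrix.diagonal (fun i => (∑ j, B i j) + (∑ j, B j i))
          - (2 * (n : ℝ) / n2) • (1 : Matrix (Fin n) (Fin n) ℝ)
          - (1 / n1 + 1 / n2) • B
          + (1 / n2) • Matrix.of (fun _ _ : Fin n => (1 : ℝ))) i j * xbar j) + 1 := by
  have hsq : ∀ i, xbar i * xbar i = xbar i := by
    intro i; rcases hxbar i with h | h <;> rw [h] <;> ring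
  have hmax : ∀ i j, max (xbar i) (xbar j) = xbar i + xbar j - xbar i * xbar j := by
    intro i j
    rcases hxbar i with h | h <;> rcases hxbar j with h' | h' <;>
      rw [h, h'] <;> norm_num
  set c : ℝ := 1 / n1 + 1 / n2 with hc
  set S : ℝ := ∑ i, xbar i with hS
  set T1 : ℝ := ∑ i, ∑ j, B i j * xbar i with hT1
  set T2 : ℝ := ∑ i, ∑ j, B i j * xbar j with hT2
  set T3 : ℝ := ∑ i, ∑ j, B i j * (xbar i * xbar j) with hT3
  -- LHS computation
  have hL : ∑ i, ∑ j,
        (B i j / n1 * max (xbar i) (xbar j) +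
          (1 - B i j) / n2 * (1 - max (xbar i) (xbar j))) =
      c * (T1 + T2 - T3) - (1 / n2) * ((n : ℝ) * S + (n : ℝ) * S - S * S)
        + (1 / n2) * ((n : ℝ) ^ 2 - n1) := by
    have step : ∀ i j,
        B i j / n1 * max (xbar i) (xbar j) +
          (1 - B i j) / n2 * (1 - max (xbar i) (xbar j)) =
        (c * (B i j * xbar i + B i j * xbar j - B i j * (xbar i * xbar j))
          - (1 / n2) * (xbar i + xbar j - xbar i * xbar j))
          + (1 / n2) * (1 - B i j) := by
      intro i j
      rw [hmax i j, hc]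
      field_simp
      ring
    rw [Finset.sum_congr rfl fun i _ => Finset.sum_congr rfl fun j _ => step i j]
    rw [dadd, dsub, dmul, dmul, dmul, dsub, dadd, dsub, dadd, dsub (fun _ _ => (1 : ℝ)) (fun i j => B i j), dprod,
      dconst1, dconst2, done', ← hT1, ← hT2, ← hT3, ← hS, ← hn1def]
  -- RHS computation
  have entry : ∀ i j, xbar i *
        ((1 / n1 + 1 / n2) • Matrix.diagonal (fun i => (∑ j, B i j) + (∑ j, B j i))
          - (2 * (n : ℝ) / n2) • (1 : Matrix (Fin n) (Fin n) ℝ)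
          - (1 / n1 + 1 / n2) • B
          + (1 / n2) • Matrix.of (fun _ _ : Fin n => (1 : ℝ))) i j * xbar j =
      (if i = j then
          (c * ((∑ k, B i k) + (∑ k, B k i)) - 2 * (n : ℝ) / n2) * (xbar i * xbar j)
        else 0)
        + ((1 / n2) * (xbar i * xbar j) - c * (B i j * (xbar i * xbar j))) := by
    intro i j
    by_cases h : i = j
    · subst h
      simp only [Matrix.add_apply, Matrix.sub_apply, Matrix.smul_apply,
        Matrix.diagonal_apply_eq, Matrix.one_apply_eq, Matrix.of_apply,
        smul_eq_mul, if_pos rfl, if_true, eq_self_iff_true, ite_true, hc]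
      ring
    · simp only [Matrix.add_apply, Matrix.sub_apply, Matrix.smul_apply,
        Matrix.diagonal_apply_ne _ h, Matrix.one_apply_ne h, Matrix.of_apply,
        smul_eq_mul, if_neg h, hc]
      ring
  have hR : (∑ i, ∑ j, xbar i *
        ((1 / n1 + 1 / n2) • Matrix.diagonal (fun i => (∑ j, B i j) + (∑ j, B j i))
          - (2 * (n : ℝ) / n2) • (1 : Matrix (Fin n) (Fin n) ℝ)
          - (1 / n1 + 1 / n2) • B
          + (1 / n2) • Matrix.of (fun _ _ : Fin n => (1 : ℝ))) i j * xbar j)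
      = c * (T1 + T2) - (2 * (n : ℝ) / n2) * S - c * T3 + (1 / n2) * (S * S) := by
    rw [Finset.sum_congr rfl fun i _ => Finset.sum_congr rfl fun j _ => entry i j]
    rw [dadd, dsub, dmul, dmul, dprod, ← hT3, ← hS]
    have hdiag : ∑ i : Fin n, ∑ j : Fin n,
        (if i = j then
          (c * ((∑ k, B i k) + (∑ k, B k i)) - 2 * (n : ℝ) / n2) * (xbar i * xbar j)
        else 0)
        = c * (T1 + T2) - (2 * (n : ℝ) / n2) * S := by
      have hrow : ∑ i : Fin n, (∑ k, B i k) * xbar i = T1 := by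
        rw [hT1]; exact Finset.sum_congr rfl fun i _ => by rw [Finset.sum_mul]
      have hcol : ∑ i : Fin n, (∑ k, B k i) * xbar i = T2 := by
        rw [hT2, Finset.sum_comm]
        exact Finset.sum_congr rfl fun j _ => by rw [Finset.sum_mul]
      calc ∑ i : Fin n, ∑ j : Fin n,
            (if i = j then
              (c * ((∑ k, B i k) + (∑ k, B k i)) - 2 * (n : ℝ) / n2) * (xbar i * xbar j)
            else 0)
          = ∑ i : Fin n,
              (c * ((∑ k, B i k) + (∑ k, B k i)) - 2 * (n : ℝ) / n2) * (xbar i * xbar i) := by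
            exact Finset.sum_congr rfl fun i _ => by
              rw [Finset.sum_ite_eq]; simp
        _ = ∑ i : Fin n,
              (c * ((∑ k, B i k) * xbar i + (∑ k, B k i) * xbar i)
                - 2 * (n : ℝ) / n2 * xbar i) := by
            exact Finset.sum_congr rfl fun i _ => by rw [hsq i]; ring
        _ = c * (T1 + T2) - (2 * (n : ℝ) / n2) * S := by
            rw [Finset.sum_sub_distrib, ← Finset.mul_sum, Finset.sum_add_distrib,
              hrow, hcol, ← Finset.mul_sum, ← hS]
    rw [hdiag]
    ring
  rw [hL, hR, ← hn2def]
  field_simp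
  ring
end
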